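/- For the generalized Gaussian family with β even, the Fisher information matrix entry g₁₁ = −E[∂²ₘₘ log f] equals (Γ(1−1/β)·β(β−1)/Γ(1/β)) · (1/σ²). -/

import Mathlib

open MeasureTheory

/-- The generalized Gaussian density. -/
noncomputable def genGaussPdf (β : ℕ) (μ σ x : ℝ) : ℝ :=
  (β : ℝ) / (2 * σ * Real.Gamma (1 / (β : ℝ))) * Real.exp (-(x - μ) ^ β / σ ^ β)

/-- The log-likelihood `l = log f`. -/
noncomputable def genGaussLogLik (β : ℕ) (μ σ x : ℝ) : ℝ :=
  Real.log (genGaussPdf β μ σ x)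

lemma loglik_eq (β : ℕ) (hβpos : 0 < β) (μ σ x : ℝ) (hσ : 0 < σ) :
    genGaussLogLik β μ σ x
      = Real.log ((β : ℝ) / (2 * σ * Real.Gamma (1 / (β : ℝ)))) - (x - μ) ^ β / σ ^ β := by
  have hΓ : 0 < Real.Gamma (1 / (β : ℝ)) :=
    Real.Gamma_pos_of_pos (by positivity)
  have hC : (β : ℝ) / (2 * σ * Real.Gamma (1 / (β : ℝ))) ≠ 0 := by positivity
  rw [genGaussLogLik, genGaussPdf, Real.log_mul hC (Real.exp_ne_zero _), Real.log_exp]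
  ring

lemma deriv1 (β : ℕ) (hβpos : 0 < β) (σ x : ℝ) (hσ : 0 < σ) (m : ℝ) :
    deriv (fun m' => genGaussLogLik β m' σ x) m
      = (β : ℝ) * (x - m) ^ (β - 1) / σ ^ β := by
  have h1 : HasDerivAt (fun m' : ℝ => x - m') (-1) m := by
    simpa using (hasDerivAt_id m).const_sub x
  have h2 := ((h1.pow β).div_const (σ ^ β)).const_sub
    (Real.log ((β : ℝ) / (2 * σ * Real.Gamma (1 / (β : ℝ)))))
  have h3 : (fun m' => genGaussLogLik β m' σ x)
      = fun m' => Real.log ((β : ℝ) / (2 * σ * Real.Gamma (1 / (β : ℝ))))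
        - (x - m') ^ β / σ ^ β := by
    funext m'; exact loglik_eq β hβpos m' σ x hσ
  simp only [Pi.pow_apply] at h2
  rw [h3, h2.deriv]
  ring

lemma deriv2 (β : ℕ) (hβpos : 0 < β) (σ x : ℝ) (hσ : 0 < σ) (μ : ℝ) :
    deriv (fun m => deriv (fun m' => genGaussLogLik β m' σ x) m) μ
      = -((β : ℝ) * ((β - 1 : ℕ) : ℝ) * (x - μ) ^ (β - 2) / σ ^ β) := by
  have h3 : (fun m => deriv (fun m' => genGaussLogLik β m' σ x) m)
      = fun m => (β : ℝ) * (x - m) ^ (β - 1) / σ ^ β := by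
    funext m; exact deriv1 β hβpos σ x hσ m
  rw [h3]
  have h1 : HasDerivAt (fun m : ℝ => x - m) (-1) μ := by
    simpa using (hasDerivAt_id μ).const_sub x
  have h2 := (((h1.pow (β - 1)).const_mul (β : ℝ)).div_const (σ ^ β))
  simp only [Pi.pow_apply] at h2
  rw [h2.deriv]
  have : β - 1 - 1 = β - 2 := by omega
  rw [this]
  ring

theorem generalized_gaussian_fisher_g11
    (β : ℕ) (hβeven : Even β) (hβpos : 0 < β) (μ σ : ℝ) (hσ : 0 < σ) :
    -∫ x : ℝ, (deriv (fun m => deriv (fun m' => genGaussLogLik β m' σ x) m) μ)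
        * genGaussPdf β μ σ x
      = Real.Gamma (1 - 1 / (β : ℝ)) * (β : ℝ) * ((β : ℝ) - 1)
        / Real.Gamma (1 / (β : ℝ)) * (1 / σ ^ 2) := by
  have hβ2 : 2 ≤ β := by rcases hβeven with ⟨k, hk⟩; omega
  have hΓ : 0 < Real.Gamma (1 / (β : ℝ)) := Real.Gamma_pos_of_pos (by positivity)
  set C : ℝ := (β : ℝ) / (2 * σ * Real.Gamma (1 / (β : ℝ))) with hC
  set K : ℝ := (β : ℝ) * ((β - 1 : ℕ) : ℝ) / σ ^ β * C with hK
  set g : ℝ → ℝ := fun t => t ^ (β - 2) * Real.exp (-t ^ β / σ ^ β) with hg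
  have step1 : (fun x : ℝ =>
      -((deriv (fun m => deriv (fun m' => genGaussLogLik β m' σ x) m) μ)
        * genGaussPdf β μ σ x)) = fun x => K * g (x - μ) := by
    funext x
    rw [deriv2 β hβpos σ x hσ μ, genGaussPdf, hK, hg, hC]
    ring
  rw [← integral_neg, step1, integral_const_mul,
    integral_sub_right_eq_self (μ := volume) g μ]
  -- evaluate ∫ g
  have heven2 : Even (β - 2) := by rcases hβeven with ⟨k, hk⟩; exact ⟨k - 1, by omega⟩
  have habs : (∫ t : ℝ, g t) = 2 * ∫ t in Set.Ioi (0 : ℝ), g t := by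
    rw [show (∫ t : ℝ, g t) = ∫ t : ℝ, g |t| from ?_, integral_comp_abs]
    congr 1; funext t
    rw [hg]
    simp only [heven2.pow_abs, hβeven.pow_abs]
  rw [habs]
  have hioi : (∫ t in Set.Ioi (0 : ℝ), g t)
      = ((σ : ℝ) ^ β)⁻¹ ^ (-(((β : ℝ) - 2) + 1) / (β : ℝ)) * (1 / (β : ℝ))
        * Real.Gamma ((((β : ℝ) - 2) + 1) / (β : ℝ)) := by
    rw [← integral_rpow_mul_exp_neg_mul_rpow (p := (β : ℝ)) (q := (β : ℝ) - 2)
      (b := ((σ : ℝ) ^ β)⁻¹) (by positivity)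
      (by have h2 : (2 : ℝ) ≤ (β : ℝ) := by exact_mod_cast hβ2
          linarith)
      (by positivity)]
    refine setIntegral_congr_fun measurableSet_Ioi (fun t ht => ?_)
    have ht0 : (0 : ℝ) < t := ht
    simp only [hg]
    congr 1
    · rw [← Real.rpow_natCast t (β - 2)]
      congr 1
      push_cast [Nat.cast_sub hβ2]
      ring
    · congr 1
      rw [← Real.rpow_natCast t β]
      field_simp
  rw [hioi]
  -- final algebra
  have harg : (((β : ℝ) - 2) + 1) / (β : ℝ) = 1 - 1 / (β : ℝ) := by
    have hβ0 : (β : ℝ) ≠ 0 := by positivity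
    field_simp
    ring
  have hpow : ((σ : ℝ) ^ β)⁻¹ ^ (-(((β : ℝ) - 2) + 1) / (β : ℝ)) = σ ^ (β - 1) := by
    have hβ0 : (β : ℝ) ≠ 0 := by positivity
    rw [← Real.rpow_natCast σ β, ← Real.rpow_neg hσ.le, ← Real.rpow_natCast σ (β - 1),
      ← Real.rpow_mul hσ.le]
    congr 1
    push_cast [Nat.cast_sub (by omega : 1 ≤ β)]
    field_simp
    ring
  rw [harg, hpow, hK, hC]
  have hcast : ((β - 1 : ℕ) : ℝ) = (β : ℝ) - 1 := by
    push_cast [Nat.cast_sub (by omega : 1 ≤ β)]; ring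
  have hσβ : σ ^ β = σ ^ (β - 1) * σ := by
    rw [← pow_succ]; congr 1; omega
  rw [hcast, hσβ]
  have hσ0 : σ ≠ 0 := ne_of_gt hσ
  have hΓ0 : Real.Gamma (1 / (β : ℝ)) ≠ 0 := ne_of_gt hΓ
  have hβ0 : (β : ℝ) ≠ 0 := by positivity
  field_simp
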